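/- Let X be an n × p real matrix, u ∈ ℝᵖ, S ⊆ {1,…,m}, λ₁,…,λ_m > 0, and ℓ ≥ 1. Define λ₋² = min{ Σ_{j ∈ S'} λ_j² : S' ⊆ {1,…,m}, |G_{S'}| ≥ ℓ }. Let S₀ ⊆ {1,…,m} \ S consist of indices j with the largest values of ‖u_{G_j}‖₂/λ_j among j ∉ S, chosen so that ℓ ≤ |G_{S₀}| < ℓ + k₀, and set G = G_S ∪ G_{S₀}. Let ρ̃₊ = √((ρ₊(G) − ρ₋(|G| + ℓ + k₀ − 1))(ρ₊(ℓ + k₀ − 1) − ρ₋(|G| + ℓ + k₀ − 1))). Then (1/n) | Σ_{j ∉ S ∪ S₀} u_Gᵀ X_Gᵀ X_{G_j} u_{G_j} | ≤ λ₋^{−1} ρ̃₊ ‖u_G‖₂ Σ_{j ∉ S} λ_j ‖u_{G_j}‖₂. -/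

import Mathlib

open Matrix MeasureTheory ProbabilityTheory

noncomputable def norm2 {ι : Type*} [Fintype ι] (v : ι → ℝ) : ℝ :=
  Real.sqrt (∑ i, v i ^ 2)

open scoped Classical in
noncomputable def invSqrt {ι : Type*} [Fintype ι] [DecidableEq ι] (M : Matrix ι ι ℝ) :
    Matrix ι ι ℝ :=
  if h : M.PosSemidef then
    ((h.1.eigenvectorUnitary : Matrix ι ι ℝ) * diagonal (fun i => Real.sqrt (h.1.eigenvalues i)) *
      (star h.1.eigenvectorUnitary : Matrix ι ι ℝ))⁻¹ else 0

def colSub {n p : ℕ} (X : Matrix (Fin n) (Fin p) ℝ) (F : Finset (Fin p)) :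
    Matrix (Fin n) {i : Fin p // i ∈ F} ℝ :=
  Matrix.of fun r c => X r c.1

noncomputable def groupProj {n p : ℕ} (X : Matrix (Fin n) (Fin p) ℝ) (F : Finset (Fin p))
    (v : Fin n → ℝ) : ℝ :=
  norm2 ((invSqrt ((colSub X F)ᵀ * colSub X F)) *ᵥ ((colSub X F)ᵀ *ᵥ v))

def restr {p : ℕ} (F : Finset (Fin p)) (β : Fin p → ℝ) : Fin p → ℝ :=
  fun i => if i ∈ F then β i else 0

/-- `G` is a partition of the index set into disjoint groups. -/
def IsPartition {p m : ℕ} (G : Fin m → Finset (Fin p)) : Prop :=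
  (∀ j₁ j₂, j₁ ≠ j₂ → Disjoint (G j₁) (G j₂)) ∧ Finset.univ.biUnion G = Finset.univ

/-- `β` is `(g, k)` strongly group-sparse. -/
def SGS {p m : ℕ} (G : Fin m → Finset (Fin p)) (g k : ℕ) (β : Fin p → ℝ) : Prop :=
  ∃ S : Finset (Fin m), S.card ≤ g ∧ (S.biUnion G).card ≤ k ∧
    ∀ i, β i ≠ 0 → i ∈ S.biUnion G

noncomputable def rhoMinusF {n p : ℕ} (X : Matrix (Fin n) (Fin p) ℝ) (F : Finset (Fin p)) : ℝ :=
  sInf {r : ℝ | ∃ β : Fin p → ℝ, β ≠ 0 ∧ (∀ i ∉ F, β i = 0) ∧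
    r = norm2 (X *ᵥ β) ^ 2 / (n * norm2 β ^ 2)}

noncomputable def rhoPlusF {n p : ℕ} (X : Matrix (Fin n) (Fin p) ℝ) (F : Finset (Fin p)) : ℝ :=
  sSup {r : ℝ | ∃ β : Fin p → ℝ, β ≠ 0 ∧ (∀ i ∉ F, β i = 0) ∧
    r = norm2 (X *ᵥ β) ^ 2 / (n * norm2 β ^ 2)}

noncomputable def rhoMinusN {n p m : ℕ} (X : Matrix (Fin n) (Fin p) ℝ)
    (G : Fin m → Finset (Fin p)) (s : ℕ) : ℝ :=
  sInf {r : ℝ | ∃ S : Finset (Fin m), (S.biUnion G).card ≤ s ∧ r = rhoMinusF X (S.biUnion G)}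

noncomputable def rhoPlusN {n p m : ℕ} (X : Matrix (Fin n) (Fin p) ℝ)
    (G : Fin m → Finset (Fin p)) (s : ℕ) : ℝ :=
  sSup {r : ℝ | ∃ S : Finset (Fin m), (S.biUnion G).card ≤ s ∧ r = rhoPlusF X (S.biUnion G)}

/-- The group Lasso objective. -/
noncomputable def glObj {n p m : ℕ} (X : Matrix (Fin n) (Fin p) ℝ)
    (G : Fin m → Finset (Fin p)) (lam : Fin m → ℝ) (y : Fin n → ℝ) (β : Fin p → ℝ) : ℝ :=
  (1 / (n : ℝ)) * norm2 (X *ᵥ β - y) ^ 2 + ∑ j, lam j * norm2 (restr (G j) β)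

section AuxLemmas

open Matrix Finset

lemma norm2_nonneg' {ι : Type*} [Fintype ι] (v : ι → ℝ) : 0 ≤ norm2 v := Real.sqrt_nonneg _

lemma norm2_sq' {ι : Type*} [Fintype ι] (v : ι → ℝ) : norm2 v ^ 2 = ∑ i, v i ^ 2 :=
  Real.sq_sqrt (Finset.sum_nonneg fun _ _ => sq_nonneg _)

lemma restr_sq_sum {p : ℕ} (F : Finset (Fin p)) (u : Fin p → ℝ) :
    norm2 (restr F u) ^ 2 = ∑ i ∈ F, u i ^ 2 := by
  calc norm2 (restr F u) ^ 2 = ∑ i, (if i ∈ F then u i ^ 2 else 0) := by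
        rw [norm2_sq']
        exact Finset.sum_congr rfl fun i _ => by by_cases h : i ∈ F <;> simp [restr, h]
    _ = ∑ i ∈ F, u i ^ 2 := by rw [Finset.sum_ite_mem, Finset.univ_inter]

lemma restr_biUnion_eq_sum {p m : ℕ} (G : Fin m → Finset (Fin p))
    (hdisj : ∀ j₁ j₂, j₁ ≠ j₂ → Disjoint (G j₁) (G j₂)) (B : Finset (Fin m)) (u : Fin p → ℝ) :
    restr (B.biUnion G) u = ∑ j ∈ B, restr (G j) u := by
  funext i
  rw [Finset.sum_apply]
  by_cases hi : i ∈ B.biUnion G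
  · obtain ⟨j₀, hj₀B, hj₀⟩ := Finset.mem_biUnion.mp hi
    rw [Finset.sum_eq_single j₀]
    · simp [restr, hi, hj₀]
    · intro j hj hne
      have hiG : i ∉ G j := fun hiGj => (Finset.disjoint_left.mp (hdisj j j₀ hne) hiGj) hj₀
      simp [restr, hiG]
    · intro h; exact absurd hj₀B h
  · have hall : ∀ j ∈ B, i ∉ G j := fun j hj hiGj => hi (Finset.mem_biUnion.mpr ⟨j, hj, hiGj⟩)
    simp only [restr, if_neg hi]
    exact (Finset.sum_eq_zero fun j hj => by simp [if_neg (hall j hj)]).symm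

lemma dot_restr_zero {p : ℕ} (F1 F2 : Finset (Fin p)) (h : Disjoint F1 F2) (u v : Fin p → ℝ) :
    ∑ i, restr F1 u i * restr F2 v i = 0 :=
  Finset.sum_eq_zero fun i _ => by
    by_cases h1 : i ∈ F1
    · have h2 : i ∉ F2 := Finset.disjoint_left.mp h h1
      simp [restr, h2]
    · simp [restr, h1]

lemma dot_sum' {κ : Type*} [DecidableEq κ] {n : ℕ} (v : Fin n → ℝ) (s : Finset κ)
    (f : κ → Fin n → ℝ) : v ⬝ᵥ (∑ j ∈ s, f j) = ∑ j ∈ s, v ⬝ᵥ f j := by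
  simp only [dotProduct, Finset.sum_apply, Finset.mul_sum]
  exact Finset.sum_comm

lemma sum_sq_pos {κ : Type*} [Fintype κ] {v : κ → ℝ} (hv : v ≠ 0) : 0 < ∑ i, v i ^ 2 := by
  have : ∃ i, v i ≠ 0 := by
    by_contra h; push_neg at h; exact hv (funext fun i => h i)
  obtain ⟨i, hi⟩ := this
  exact Finset.sum_pos' (fun j _ => sq_nonneg _)
    ⟨i, Finset.mem_univ i, by positivity⟩

lemma ratio_le_C {n p : ℕ} (X : Matrix (Fin n) (Fin p) ℝ) (β : Fin p → ℝ) :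
    norm2 (X *ᵥ β) ^ 2 / (n * norm2 β ^ 2) ≤ (∑ r, ∑ i, X r i ^ 2) / n := by
  have hK : 0 ≤ ∑ r, ∑ i, X r i ^ 2 :=
    Finset.sum_nonneg fun r _ => Finset.sum_nonneg fun i _ => sq_nonneg _
  rcases Nat.eq_zero_or_pos n with rfl | hn
  · simp
  have hnR : (0:ℝ) < n := by exact_mod_cast hn
  have hB0 : (0:ℝ) ≤ norm2 β ^ 2 := sq_nonneg _
  have hA : norm2 (X *ᵥ β) ^ 2 ≤ (∑ r, ∑ i, X r i ^ 2) * norm2 β ^ 2 := by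
    rw [norm2_sq', norm2_sq', Finset.sum_mul]
    refine Finset.sum_le_sum fun r _ => ?_
    have : (X *ᵥ β) r = ∑ i, X r i * β i := rfl
    rw [this]
    exact Finset.sum_mul_sq_le_sq_mul_sq Finset.univ _ _
  rcases eq_or_lt_of_le hB0 with hB | hB
  · rw [← hB, mul_zero, div_zero]
    positivity
  · rw [div_le_div_iff₀ (by positivity) hnR]
    calc norm2 (X *ᵥ β) ^ 2 * n ≤ ((∑ r, ∑ i, X r i ^ 2) * norm2 β ^ 2) * n :=
          mul_le_mul_of_nonneg_right hA hnR.le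
      _ = (∑ r, ∑ i, X r i ^ 2) * (n * norm2 β ^ 2) := by ring

end AuxLemmas
section AuxLemmasB

open Matrix Finset

lemma rhoPlusF_le_C {n p : ℕ} (X : Matrix (Fin n) (Fin p) ℝ) (F : Finset (Fin p)) :
    rhoPlusF X F ≤ (∑ r, ∑ i, X r i ^ 2) / n := by
  refine Real.sSup_le ?_ (by positivity)
  rintro r ⟨β, -, -, rfl⟩
  exact ratio_le_C X β

lemma le_rhoPlusF {n p : ℕ} (X : Matrix (Fin n) (Fin p) ℝ) (F : Finset (Fin p))
    (β : Fin p → ℝ) (hβ : β ≠ 0) (hsupp : ∀ i ∉ F, β i = 0) :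
    norm2 (X *ᵥ β) ^ 2 / (n * norm2 β ^ 2) ≤ rhoPlusF X F := by
  refine le_csSup ⟨(∑ r, ∑ i, X r i ^ 2) / n, ?_⟩ ⟨β, hβ, hsupp, rfl⟩
  rintro r ⟨β', -, -, rfl⟩
  exact ratio_le_C X β'

lemma rhoPlusF_le_rhoPlusN {n p m : ℕ} (X : Matrix (Fin n) (Fin p) ℝ)
    (G : Fin m → Finset (Fin p)) (s : ℕ) (S' : Finset (Fin m))
    (hcard : (S'.biUnion G).card ≤ s) :
    rhoPlusF X (S'.biUnion G) ≤ rhoPlusN X G s := by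
  refine le_csSup ⟨(∑ r, ∑ i, X r i ^ 2) / n, ?_⟩ ⟨S', hcard, rfl⟩
  rintro r ⟨S'', -, rfl⟩
  exact rhoPlusF_le_C X _

lemma rhoMinusF_nonneg {n p : ℕ} (X : Matrix (Fin n) (Fin p) ℝ) (F : Finset (Fin p)) :
    0 ≤ rhoMinusF X F := by
  refine Real.sInf_nonneg ?_
  rintro r ⟨β, -, -, rfl⟩
  positivity

lemma rhoMinusF_le {n p : ℕ} (X : Matrix (Fin n) (Fin p) ℝ) (F : Finset (Fin p))
    (β : Fin p → ℝ) (hβ : β ≠ 0) (hsupp : ∀ i ∉ F, β i = 0) :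
    rhoMinusF X F ≤ norm2 (X *ᵥ β) ^ 2 / (n * norm2 β ^ 2) := by
  refine csInf_le ⟨0, ?_⟩ ⟨β, hβ, hsupp, rfl⟩
  rintro r ⟨β', -, -, rfl⟩
  positivity

lemma rhoMinusN_le {n p m : ℕ} (X : Matrix (Fin n) (Fin p) ℝ)
    (G : Fin m → Finset (Fin p)) (s : ℕ) (S' : Finset (Fin m))
    (hcard : (S'.biUnion G).card ≤ s) :
    rhoMinusN X G s ≤ rhoMinusF X (S'.biUnion G) := by
  refine csInf_le ⟨0, ?_⟩ ⟨S', hcard, rfl⟩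
  rintro r ⟨S'', -, rfl⟩
  exact rhoMinusF_nonneg X _

lemma exists_sorted_list {ι : Type*} [DecidableEq ι] (f : ι → ℝ) (T : Finset ι) :
    ∃ l : List ι, l.Nodup ∧ l.toFinset = T ∧ l.Pairwise fun a b => f b ≤ f a := by
  induction T using Finset.strongInduction with
  | _ T ih =>
    rcases T.eq_empty_or_nonempty with rfl | hne
    · exact ⟨[], by simp, by simp, by simp⟩
    · obtain ⟨a, haT, ha⟩ := T.exists_max_image f hne
      obtain ⟨l, hnd, hts, hp⟩ := ih (T.erase a) (Finset.erase_ssubset haT)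
      have hal : a ∉ l := by
        intro h
        have : a ∈ T.erase a := hts ▸ List.mem_toFinset.mpr h
        exact (Finset.notMem_erase a T) this
      refine ⟨a :: l, List.nodup_cons.mpr ⟨hal, hnd⟩, ?_, ?_⟩
      · rw [List.toFinset_cons, hts, Finset.insert_erase haT]
      · refine List.pairwise_cons.mpr ⟨fun b hb => ?_, hp⟩
        have : b ∈ T.erase a := hts ▸ List.mem_toFinset.mpr hb
        exact ha b (Finset.mem_of_mem_erase this)

lemma exists_block_split {ι : Type*} (w : ι → ℕ) (k0 : ℕ) (hk0 : 1 ≤ k0) :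
    ∀ (l : List ι) (ℓ : ℕ), 1 ≤ ℓ → (∀ i ∈ l, w i ≤ k0) → l ≠ [] →
    ∃ B rest : List ι, l = B ++ rest ∧ B ≠ [] ∧ (B.map w).sum ≤ ℓ + k0 - 1 ∧
      (rest = [] ∨ ℓ ≤ (B.map w).sum) := by
  intro l
  induction l with
  | nil => intro _ _ _ h; exact absurd rfl h
  | cons x xs ih =>
    intro ℓ hℓ hw _
    have hwx : w x ≤ k0 := hw x List.mem_cons_self
    by_cases hx : ℓ ≤ w x
    · exact ⟨[x], xs, rfl, by simp, by simp; omega, Or.inr (by simpa using hx)⟩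
    · push_neg at hx
      rcases eq_or_ne xs List.nil with rfl | hxs
      · exact ⟨[x], [], by simp, by simp, by simp; omega, Or.inl rfl⟩
      · obtain ⟨B, rest, heq, hBne, hsum, hc⟩ :=
          ih (ℓ - w x) (by omega) (fun i hi => hw i (List.mem_cons_of_mem _ hi)) hxs
        refine ⟨x :: B, rest, by rw [heq, List.cons_append], by simp, ?_, ?_⟩
        · simp only [List.map_cons, List.sum_cons]
          omega
        · rcases hc with h | h
          · exact Or.inl h
          · refine Or.inr ?_
            simp only [List.map_cons, List.sum_cons]
            omega

end AuxLemmasB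
section AuxLemmasC

open Matrix Finset

lemma sqrt_mul_le_half_add {a b : ℝ} (ha : 0 ≤ a) (hb : 0 ≤ b) :
    Real.sqrt (a * b) ≤ (a + b) / 2 := by
  have h : a * b ≤ ((a + b) / 2) ^ 2 := by nlinarith [sq_nonneg (a - b)]
  calc Real.sqrt (a * b) ≤ Real.sqrt (((a + b) / 2) ^ 2) := Real.sqrt_le_sqrt h
    _ = |(a + b) / 2| := Real.sqrt_sq_eq_abs _
    _ = (a + b) / 2 := abs_of_nonneg (by positivity)

lemma shift_induction {ι : Type*} [DecidableEq ι]
    (d ν lam : ι → ℝ) (w : ι → ℕ) (k0 ℓ : ℕ) (T : Finset ι)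
    (K lm2 : ℝ) (hK : 0 ≤ K) (hlm2 : 0 < lm2)
    (hν : ∀ j, 0 ≤ ν j) (hlam : ∀ j, 0 < lam j) (hw : ∀ j, w j ≤ k0)
    (hk0 : 1 ≤ k0) (hℓ : 1 ≤ ℓ)
    (hfull : ∀ B : Finset ι, ℓ ≤ ∑ j ∈ B, w j → lm2 ≤ ∑ j ∈ B, lam j ^ 2)
    (hblock : ∀ B : Finset ι, B ⊆ T → (∑ j ∈ B, w j) ≤ ℓ + k0 - 1 →
      |∑ j ∈ B, d j| ≤ K * Real.sqrt (∑ j ∈ B, ν j ^ 2)) :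
    ∀ (N : ℕ) (l : List ι), l.length ≤ N → l.Nodup → l.toFinset ⊆ T →
      l.Pairwise (fun a b => ν b / lam b ≤ ν a / lam a) →
      ∀ P : Finset ι, lm2 ≤ ∑ j ∈ P, lam j ^ 2 →
      (∀ j ∈ l, ∀ j' ∈ P, ν j / lam j ≤ ν j' / lam j') →
      |∑ j ∈ l.toFinset, d j| ≤
        (Real.sqrt lm2)⁻¹ * K *
          ((∑ j ∈ P, lam j * ν j) / 2 + ∑ j ∈ l.toFinset, lam j * ν j) := by
  have hs2 : 0 < Real.sqrt lm2 := Real.sqrt_pos.mpr hlm2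
  have hlamNu : ∀ (Q : Finset ι), 0 ≤ ∑ j ∈ Q, lam j * ν j :=
    fun Q => Finset.sum_nonneg fun j _ => mul_nonneg (hlam j).le (hν j)
  intro N
  induction N with
  | zero =>
    intro l hlen _ _ _ P _ _
    have : l = [] := List.length_eq_zero_iff.mp (Nat.le_zero.mp hlen)
    subst this
    simp only [List.toFinset_nil, Finset.sum_empty, abs_zero]
    have := hlamNu P
    positivity
  | succ N ih =>
    intro l hlen hnd hsub hsort P hP hPr
    rcases eq_or_ne l List.nil with rfl | hlne
    · simp only [List.toFinset_nil, Finset.sum_empty, abs_zero]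
      have := hlamNu P
      positivity
    obtain ⟨B, rest, heq, hBne, hsum, hfull_or⟩ :=
      exists_block_split w k0 hk0 l ℓ hℓ (fun i _ => hw i) hlne
    subst heq
    obtain ⟨hndB, hndR, hdisjBR⟩ := List.nodup_append'.mp hnd
    have htf : (B ++ rest).toFinset = B.toFinset ∪ rest.toFinset := List.toFinset_append
    have hdisjF : Disjoint B.toFinset rest.toFinset := by
      rw [List.disjoint_toFinset_iff_disjoint]; exact hdisjBR
    have hBsubT : B.toFinset ⊆ T := fun x hx => hsub (by
      rw [htf]; exact Finset.mem_union_left _ hx)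
    have hRsubT : rest.toFinset ⊆ T := fun x hx => hsub (by
      rw [htf]; exact Finset.mem_union_right _ hx)
    have hsumw : ∑ j ∈ B.toFinset, w j = (B.map w).sum := List.sum_toFinset w hndB
    have hsplit : ∑ j ∈ (B ++ rest).toFinset, d j =
        (∑ j ∈ B.toFinset, d j) + ∑ j ∈ rest.toFinset, d j := by
      rw [htf, Finset.sum_union hdisjF]
    have hsplitLN : ∑ j ∈ (B ++ rest).toFinset, lam j * ν j =
        (∑ j ∈ B.toFinset, lam j * ν j) + ∑ j ∈ rest.toFinset, lam j * ν j := by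
      rw [htf, Finset.sum_union hdisjF]
    set aP := ∑ j ∈ P, lam j * ν j with haP
    set aB := ∑ j ∈ B.toFinset, lam j * ν j with haB
    set aR := ∑ j ∈ rest.toFinset, lam j * ν j with haR
    have haP0 : 0 ≤ aP := hlamNu P
    have haB0 : 0 ≤ aB := hlamNu _
    have haR0 : 0 ≤ aR := hlamNu _
    -- block bound
    have hQ1 : |∑ j ∈ B.toFinset, d j| ≤ K * Real.sqrt (∑ j ∈ B.toFinset, ν j ^ 2) :=
      hblock B.toFinset hBsubT (by rw [hsumw]; exact hsum)
    -- shifting bound: lm2 * Σ ν² ≤ aP * aB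
    have hterm : ∀ j ∈ B.toFinset, lm2 * ν j ^ 2 ≤ aP * (lam j * ν j) := by
      intro j hj
      have hjl : j ∈ B ++ rest := List.mem_append_left _ (List.mem_toFinset.mp hj)
      have hrj0 : 0 ≤ ν j / lam j := div_nonneg (hν j) (hlam j).le
      have h1 : lm2 * (ν j / lam j) ≤ aP := by
        calc lm2 * (ν j / lam j) ≤ (∑ j' ∈ P, lam j' ^ 2) * (ν j / lam j) :=
              mul_le_mul_of_nonneg_right hP hrj0
          _ = ∑ j' ∈ P, lam j' ^ 2 * (ν j / lam j) := Finset.sum_mul _ _ _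
          _ ≤ ∑ j' ∈ P, lam j' ^ 2 * (ν j' / lam j') :=
              Finset.sum_le_sum fun j' hj' =>
                mul_le_mul_of_nonneg_left (hPr j hjl j' hj') (sq_nonneg _)
          _ = aP := Finset.sum_congr rfl fun j' _ => by
              field_simp [(hlam j').ne']
      have hident : lm2 * ν j ^ 2 = (lm2 * (ν j / lam j)) * (lam j * ν j) := by
        field_simp [(hlam j).ne']
      rw [hident]
      exact mul_le_mul_of_nonneg_right h1 (mul_nonneg (hlam j).le (hν j))
    have hsumshift : lm2 * (∑ j ∈ B.toFinset, ν j ^ 2) ≤ aP * aB := by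
      rw [Finset.mul_sum, haB, Finset.mul_sum]
      exact Finset.sum_le_sum hterm
    have hν2 : 0 ≤ ∑ j ∈ B.toFinset, ν j ^ 2 := Finset.sum_nonneg fun j _ => sq_nonneg _
    have hkey : Real.sqrt (∑ j ∈ B.toFinset, ν j ^ 2) ≤
        (Real.sqrt lm2)⁻¹ * Real.sqrt (aP * aB) := by
      have h1 : (∑ j ∈ B.toFinset, ν j ^ 2) ≤ (aP * aB) / lm2 := by
        rw [le_div_iff₀ hlm2]
        linarith [hsumshift]
      calc Real.sqrt (∑ j ∈ B.toFinset, ν j ^ 2) ≤ Real.sqrt ((aP * aB) / lm2) :=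
            Real.sqrt_le_sqrt h1
        _ = Real.sqrt (aP * aB) / Real.sqrt lm2 := Real.sqrt_div (mul_nonneg haP0 haB0) _
        _ = (Real.sqrt lm2)⁻¹ * Real.sqrt (aP * aB) := by rw [div_eq_inv_mul]
    have hBbound : |∑ j ∈ B.toFinset, d j| ≤ (Real.sqrt lm2)⁻¹ * K * ((aP + aB) / 2) := by
      calc |∑ j ∈ B.toFinset, d j| ≤ K * Real.sqrt (∑ j ∈ B.toFinset, ν j ^ 2) := hQ1
        _ ≤ K * ((Real.sqrt lm2)⁻¹ * Real.sqrt (aP * aB)) :=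
            mul_le_mul_of_nonneg_left hkey hK
        _ ≤ K * ((Real.sqrt lm2)⁻¹ * ((aP + aB) / 2)) := by
            refine mul_le_mul_of_nonneg_left ?_ hK
            exact mul_le_mul_of_nonneg_left (sqrt_mul_le_half_add haP0 haB0)
              (inv_nonneg.mpr hs2.le)
        _ = (Real.sqrt lm2)⁻¹ * K * ((aP + aB) / 2) := by ring
    have hC : 0 ≤ (Real.sqrt lm2)⁻¹ * K := mul_nonneg (inv_nonneg.mpr hs2.le) hK
    rcases hfull_or with hrE | hfullB
    · -- rest empty
      subst hrE
      have haR' : aR = 0 := by simp [haR]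
      rw [hsplit, hsplitLN, haR']
      calc |∑ j ∈ B.toFinset, d j + ∑ j ∈ ([] : List ι).toFinset, d j|
            = |∑ j ∈ B.toFinset, d j| := by simp
        _ ≤ (Real.sqrt lm2)⁻¹ * K * ((aP + aB) / 2) := hBbound
        _ ≤ (Real.sqrt lm2)⁻¹ * K * (aP / 2 + (aB + 0)) := by nlinarith [hC, haB0]
    · -- B is full : recurse on rest with P := B.toFinset
      have hlm2B : lm2 ≤ ∑ j ∈ B.toFinset, lam j ^ 2 :=
        hfull B.toFinset (by rw [hsumw]; exact hfullB)
      have hlenR : rest.length ≤ N := by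
        have h1 : (B ++ rest).length = B.length + rest.length := List.length_append
        have h2 : 1 ≤ B.length := List.length_pos_iff.mpr hBne
        omega
      have hsortR : rest.Pairwise fun a b => ν b / lam b ≤ ν a / lam a :=
        hsort.sublist (List.sublist_append_right B rest)
      have hordR : ∀ j ∈ rest, ∀ j' ∈ B.toFinset, ν j / lam j ≤ ν j' / lam j' := by
        intro j hj j' hj'
        exact (List.pairwise_append.mp hsort).2.2 j' (List.mem_toFinset.mp hj') j hj
      have hIH := ih rest hlenR hndR hRsubT hsortR B.toFinset hlm2B hordR
      rw [hsplit, hsplitLN]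
      calc |(∑ j ∈ B.toFinset, d j) + ∑ j ∈ rest.toFinset, d j| ≤
            |∑ j ∈ B.toFinset, d j| + |∑ j ∈ rest.toFinset, d j| := abs_add_le _ _
        _ ≤ (Real.sqrt lm2)⁻¹ * K * ((aP + aB) / 2) +
            (Real.sqrt lm2)⁻¹ * K * (aB / 2 + aR) := add_le_add hBbound hIH
        _ = (Real.sqrt lm2)⁻¹ * K * (aP / 2 + (aB + aR)) := by ring

end AuxLemmasC
section AuxLemmasD

open Matrix Finset

lemma biUnion_union' {α β : Type*} [DecidableEq α] [DecidableEq β] (s t : Finset α)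
    (f : α → Finset β) : (s ∪ t).biUnion f = s.biUnion f ∪ t.biUnion f := by
  ext x
  simp only [Finset.mem_biUnion, Finset.mem_union]
  constructor
  · rintro ⟨a, (h | h), hx⟩
    · exact Or.inl ⟨a, h, hx⟩
    · exact Or.inr ⟨a, h, hx⟩
  · rintro (⟨a, h, hx⟩ | ⟨a, h, hx⟩)
    · exact ⟨a, Or.inl h, hx⟩
    · exact ⟨a, Or.inr h, hx⟩

lemma mulVec_sum' {n p : ℕ} (X : Matrix (Fin n) (Fin p) ℝ) {κ : Type*} (s : Finset κ)
    (f : κ → Fin p → ℝ) : X *ᵥ (∑ j ∈ s, f j) = ∑ j ∈ s, X *ᵥ f j :=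
  map_sum X.mulVecLin f s

lemma sum_add_sq' {κ : Type*} [Fintype κ] (f g : κ → ℝ) (t : ℝ) :
    ∑ i, (f i + t * g i) ^ 2 =
      (∑ i, f i ^ 2) + 2 * t * (∑ i, f i * g i) + t ^ 2 * ∑ i, g i ^ 2 := by
  rw [Finset.mul_sum, Finset.mul_sum, ← Finset.sum_add_distrib, ← Finset.sum_add_distrib]
  exact Finset.sum_congr rfl fun i _ => by ring

lemma block_spectral (n p m : ℕ) (hn : 0 < n) (X : Matrix (Fin n) (Fin p) ℝ)
    (G : Fin m → Finset (Fin p)) (hdisj : ∀ j₁ j₂, j₁ ≠ j₂ → Disjoint (G j₁) (G j₂))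
    (u : Fin p → ℝ) (S S0 : Finset (Fin m)) (Gset : Finset (Fin p))
    (hGset : Gset = S.biUnion G ∪ S0.biUnion G)
    (k0 ℓ : ℕ) (hℓ : 1 ≤ ℓ) (hk0 : 1 ≤ k0)
    (ρt : ℝ)
    (hρt : ρt = Real.sqrt ((rhoPlusF X Gset - rhoMinusN X G (Gset.card + ℓ + k0 - 1)) *
      (rhoPlusN X G (ℓ + k0 - 1) - rhoMinusN X G (Gset.card + ℓ + k0 - 1))))
    (ha : restr Gset u ≠ 0)
    (B : Finset (Fin m)) (hBout : ∀ j ∈ B, j ∉ S ∪ S0)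
    (hBcard : (B.biUnion G).card ≤ ℓ + k0 - 1) :
    |∑ j ∈ B, (X *ᵥ restr Gset u) ⬝ᵥ (X *ᵥ restr (G j) u)| / n ≤
      ρt * norm2 (restr Gset u) * Real.sqrt (∑ j ∈ B, norm2 (restr (G j) u) ^ 2) := by
  set a := restr Gset u with hadef
  set b := restr (B.biUnion G) u with hbdef
  clear_value a b
  have hnR : (0:ℝ) < n := by exact_mod_cast hn
  -- basic rewrite of the sum as a single dot product
  have hsumdot : ∑ j ∈ B, (X *ᵥ a) ⬝ᵥ (X *ᵥ restr (G j) u) = (X *ᵥ a) ⬝ᵥ (X *ᵥ b) := by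
    rw [hbdef, restr_biUnion_eq_sum G hdisj, mulVec_sum', dot_sum']
  -- norm2 b equals sqrt of block sum
  have hGsetB : Gset = (S ∪ S0).biUnion G := by rw [hGset, biUnion_union']
  have hdisjGsetB : Disjoint Gset (B.biUnion G) := by
    rw [hGsetB]
    refine Finset.disjoint_biUnion_right _ _ _ |>.mpr fun j hj => ?_
    refine Finset.disjoint_biUnion_left _ _ _ |>.mpr fun j' hj' => ?_
    exact hdisj j' j (fun h => hBout j hj (h ▸ hj'))
  have hb2 : norm2 b ^ 2 = ∑ j ∈ B, norm2 (restr (G j) u) ^ 2 := by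
    rw [hbdef, restr_sq_sum,
      Finset.sum_biUnion (fun x hx y hy hxy => hdisj x y hxy)]
    exact Finset.sum_congr rfl fun j _ => (restr_sq_sum _ _).symm
  have hbnn : (0:ℝ) ≤ norm2 b := norm2_nonneg' b
  have hbval : Real.sqrt (∑ j ∈ B, norm2 (restr (G j) u) ^ 2) = norm2 b := by
    rw [← hb2, Real.sqrt_sq hbnn]
  have hρt0 : 0 ≤ ρt := hρt ▸ Real.sqrt_nonneg _
  rw [hsumdot, hbval]
  by_cases hb : b = 0
  · rw [hb]
    simp only [mulVec_zero, dotProduct_zero, abs_zero, zero_div]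
    exact mul_nonneg (mul_nonneg hρt0 (norm2_nonneg' a)) (norm2_nonneg' _)
  -- main case
  set F : Finset (Fin p) := (B ∪ (S ∪ S0)).biUnion G with hF
  have hFeq : F = B.biUnion G ∪ Gset := by rw [hF, biUnion_union', hGsetB]
  have hFcard : F.card ≤ Gset.card + ℓ + k0 - 1 := by
    have h1 : F.card ≤ (B.biUnion G).card + Gset.card := by
      rw [hFeq]; exact Finset.card_union_le _ _
    omega
  set ρm := rhoMinusN X G (Gset.card + ℓ + k0 - 1) with hρm
  clear_value ρm
  have hρmF : ρm ≤ rhoMinusF X F := by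
    rw [hρm]
    exact rhoMinusN_le X G _ _ hFcard
  -- support facts
  have hasupp : ∀ i ∉ Gset, a i = 0 := fun i hi => by simp [hadef, restr, hi]
  have hbsupp : ∀ i ∉ B.biUnion G, b i = 0 := fun i hi => by simp [hbdef, restr, hi]
  have hGsetF : Gset ⊆ F := hFeq ▸ Finset.subset_union_right
  have hBF : B.biUnion G ⊆ F := hFeq ▸ Finset.subset_union_left
  have haF : ∀ i ∉ F, a i = 0 := fun i hi => hasupp i (fun h => hi (hGsetF h))
  have hbF : ∀ i ∉ F, b i = 0 := fun i hi => hbsupp i (fun h => hi (hBF h))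
  -- quadratic form nonnegativity on F
  have hQ : ∀ v : Fin p → ℝ, (∀ i ∉ F, v i = 0) →
      ρm * (∑ i, v i ^ 2) ≤ (∑ r, (X *ᵥ v) r ^ 2) / n := by
    intro v hv
    by_cases hv0 : v = 0
    · subst hv0
      simp [mulVec_zero]
    · have hden : (0:ℝ) < n * norm2 v ^ 2 := by
        have := sum_sq_pos hv0
        rw [norm2_sq']
        positivity
      have h1 : ρm ≤ norm2 (X *ᵥ v) ^ 2 / (n * norm2 v ^ 2) :=
        le_trans hρmF (rhoMinusF_le X F v hv0 hv)
      rw [le_div_iff₀ hden] at h1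
      rw [norm2_sq', norm2_sq'] at h1
      rw [le_div_iff₀ hnR]
      nlinarith [h1]
  -- cross terms vanish
  have hab0 : ∑ i, a i * b i = 0 := by
    rw [hadef, hbdef]
    exact dot_restr_zero Gset (B.biUnion G) hdisjGsetB u u
  set qa := (∑ r, (X *ᵥ a) r ^ 2) / n - ρm * (∑ i, a i ^ 2) with hqa
  set qb := (∑ r, (X *ᵥ b) r ^ 2) / n - ρm * (∑ i, b i ^ 2) with hqb
  clear_value qa qb
  set D := (X *ᵥ a) ⬝ᵥ (X *ᵥ b) with hD
  have hDsum : D = ∑ r, (X *ᵥ a) r * (X *ᵥ b) r := rfl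
  clear_value D
  have hqa0 : 0 ≤ qa := by
    have := hQ a haF
    rw [hqa]; linarith
  have hqb0 : 0 ≤ qb := by
    have := hQ b hbF
    rw [hqb]; linarith
  -- discriminant argument
  have hquad : ∀ t : ℝ, 0 ≤ qb * (t * t) + (2 * (D / n)) * t + qa := by
    intro t
    have hvF : ∀ i ∉ F, (fun i => a i + t * b i) i = 0 := fun i hi => by
      simp [haF i hi, hbF i hi]
    have h0 := hQ (fun i => a i + t * b i) hvF
    have e1 : (X *ᵥ fun i => a i + t * b i) = fun r => (X *ᵥ a) r + t * (X *ᵥ b) r := by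
      have : (fun i => a i + t * b i) = a + t • b := by funext i; simp [Pi.smul_apply]
      rw [this, mulVec_add, mulVec_smul]
      rfl
    rw [e1] at h0
    rw [sum_add_sq' (X *ᵥ a) (X *ᵥ b) t] at h0
    rw [sum_add_sq' a b t, hab0] at h0
    rw [← hDsum] at h0
    have hexp : ((∑ r, (X *ᵥ a) r ^ 2) + 2 * t * D + t ^ 2 * ∑ r, (X *ᵥ b) r ^ 2) / n =
        (∑ r, (X *ᵥ a) r ^ 2) / n + 2 * t * (D / n) + t ^ 2 * ((∑ r, (X *ᵥ b) r ^ 2) / n) := by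
      field_simp
    rw [hexp] at h0
    have hId : qb * (t * t) + (2 * (D / n)) * t + qa =
        ((∑ r, (X *ᵥ a) r ^ 2) / n + 2 * t * (D / n) + t ^ 2 * ((∑ r, (X *ᵥ b) r ^ 2) / n)) -
          ρm * ((∑ i, a i ^ 2) + 2 * t * 0 + t ^ 2 * ∑ i, b i ^ 2) := by
      rw [hqa, hqb]; ring
    rw [hId]
    linarith
  have hdisc := discrim_le_zero hquad
  rw [discrim] at hdisc
  have hD2 : (D / n) ^ 2 ≤ qa * qb := by nlinarith [hdisc]
  have habs : |D / n| ≤ Real.sqrt qa * Real.sqrt qb := by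
    rw [← Real.sqrt_sq_eq_abs]
    calc Real.sqrt ((D / n) ^ 2) ≤ Real.sqrt (qa * qb) := Real.sqrt_le_sqrt hD2
      _ = Real.sqrt qa * Real.sqrt qb := Real.sqrt_mul hqa0 _
  -- bound qa and qb
  have hSa : (0:ℝ) < ∑ i, a i ^ 2 := sum_sq_pos ha
  have hSb : (0:ℝ) < ∑ i, b i ^ 2 := sum_sq_pos hb
  set f1 := rhoPlusF X Gset - ρm with hf1
  set f2 := rhoPlusN X G (ℓ + k0 - 1) - ρm with hf2
  clear_value f1 f2
  have hqaf1 : qa ≤ f1 * ∑ i, a i ^ 2 := by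
    have h1 : norm2 (X *ᵥ a) ^ 2 / (n * norm2 a ^ 2) ≤ rhoPlusF X Gset :=
      le_rhoPlusF X Gset a ha hasupp
    rw [hqa, hf1]
    generalize hg : rhoPlusF X Gset = rG at h1 ⊢
    rw [norm2_sq', norm2_sq', div_le_iff₀ (mul_pos hnR hSa)] at h1
    have h2 : (∑ r, (X *ᵥ a) r ^ 2) / n ≤ rG * ∑ i, a i ^ 2 := by
      rw [div_le_iff₀ hnR]
      calc (∑ r, (X *ᵥ a) r ^ 2) ≤ rG * ((n:ℝ) * ∑ i, a i ^ 2) := h1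
        _ = rG * (∑ i, a i ^ 2) * n := by ring
    exact le_trans (sub_le_sub_right h2 _) (le_of_eq (by ring))
  have hqbf2 : qb ≤ f2 * ∑ i, b i ^ 2 := by
    have h1 : norm2 (X *ᵥ b) ^ 2 / (n * norm2 b ^ 2) ≤ rhoPlusF X (B.biUnion G) :=
      le_rhoPlusF X _ b hb hbsupp
    have h1' : rhoPlusF X (B.biUnion G) ≤ rhoPlusN X G (ℓ + k0 - 1) :=
      rhoPlusF_le_rhoPlusN X G _ B hBcard
    rw [hqb, hf2]
    generalize hg1 : rhoPlusF X (B.biUnion G) = rB at h1 h1'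
    generalize hg2 : rhoPlusN X G (ℓ + k0 - 1) = rN at h1' ⊢
    rw [norm2_sq', norm2_sq', div_le_iff₀ (mul_pos hnR hSb)] at h1
    have h2 : (∑ r, (X *ᵥ b) r ^ 2) / n ≤ rN * ∑ i, b i ^ 2 := by
      rw [div_le_iff₀ hnR]
      calc (∑ r, (X *ᵥ b) r ^ 2) ≤ rB * ((n:ℝ) * ∑ i, b i ^ 2) := h1
        _ ≤ rN * ((n:ℝ) * ∑ i, b i ^ 2) :=
            mul_le_mul_of_nonneg_right h1' (by positivity)
        _ = rN * (∑ i, b i ^ 2) * n := by ring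
    exact le_trans (sub_le_sub_right h2 _) (le_of_eq (by ring))
  have hf10 : 0 ≤ f1 := by
    by_contra h
    push_neg at h
    have hneg : f1 * ∑ i, a i ^ 2 < 0 := mul_neg_of_neg_of_pos h hSa
    exact absurd (le_trans hqa0 hqaf1) (not_le.mpr hneg)
  have hf20 : 0 ≤ f2 := by
    by_contra h
    push_neg at h
    have hneg : f2 * ∑ i, b i ^ 2 < 0 := mul_neg_of_neg_of_pos h hSb
    exact absurd (le_trans hqb0 hqbf2) (not_le.mpr hneg)
  have hρteq : ρt = Real.sqrt f1 * Real.sqrt f2 := by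
    rw [hρt, Real.sqrt_mul hf10]
  have hna : norm2 a = Real.sqrt (∑ i, a i ^ 2) := rfl
  have hnb : norm2 b = Real.sqrt (∑ i, b i ^ 2) := rfl
  have hsqa : Real.sqrt qa ≤ Real.sqrt f1 * norm2 a := by
    rw [hna, ← Real.sqrt_mul hf10]
    exact Real.sqrt_le_sqrt hqaf1
  have hsqb : Real.sqrt qb ≤ Real.sqrt f2 * norm2 b := by
    rw [hnb, ← Real.sqrt_mul hf20]
    exact Real.sqrt_le_sqrt hqbf2
  have hfinal : |D| / n ≤ ρt * norm2 a * norm2 b := by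
    have h1 : |D| / n = |D / n| := by
      rw [abs_div, abs_of_pos hnR]
    rw [h1, hρteq]
    calc |D / n| ≤ Real.sqrt qa * Real.sqrt qb := habs
      _ ≤ (Real.sqrt f1 * norm2 a) * (Real.sqrt f2 * norm2 b) := by
          exact mul_le_mul hsqa hsqb (Real.sqrt_nonneg _)
            (mul_nonneg (Real.sqrt_nonneg _) (norm2_nonneg' _))
      _ = Real.sqrt f1 * Real.sqrt f2 * norm2 a * norm2 b := by ring
  exact hfinal

end AuxLemmasD
/-- second inequality of Lemma 9: with the setup of Statement 11,
`G = G_S ∪ G_{S₀}` and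
`ρ̃₊ = √((ρ₊(G) - ρ₋(|G|+ℓ+k₀-1))(ρ₊(ℓ+k₀-1) - ρ₋(|G|+ℓ+k₀-1)))`, we have
`(1/n)|Σ_{j ∉ S ∪ S₀} u_Gᵀ X_Gᵀ X_{G_j} u_{G_j}| ≤ λ₋⁻¹ ρ̃₊ ‖u_G‖₂ Σ_{j ∉ S} λ_j ‖u_{G_j}‖₂`. -/
theorem stmt_12 (n p m : ℕ) (X : Matrix (Fin n) (Fin p) ℝ)
    (G : Fin m → Finset (Fin p)) (hG : IsPartition G)
    (k0 : ℕ) (hk0 : k0 = Finset.univ.sup fun j => (G j).card)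
    (u : Fin p → ℝ) (S : Finset (Fin m)) (lam : Fin m → ℝ) (hlam : ∀ j, 0 < lam j)
    (ℓ : ℕ) (hℓ : 1 ≤ ℓ)
    (lamMinus : ℝ)
    (hlamMinus : lamMinus = Real.sqrt (sInf {r : ℝ | ∃ S' : Finset (Fin m),
      ℓ ≤ (S'.biUnion G).card ∧ r = ∑ j ∈ S', lam j ^ 2}))
    (S0 : Finset (Fin m)) (hS0S : Disjoint S0 S)
    (hS0top : ∀ j ∈ S0, ∀ j', j' ∉ S → j' ∉ S0 →
      norm2 (restr (G j') u) / lam j' ≤ norm2 (restr (G j) u) / lam j)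
    (hcard1 : ℓ ≤ (S0.biUnion G).card) (hcard2 : (S0.biUnion G).card < ℓ + k0)
    (Gset : Finset (Fin p)) (hGset : Gset = S.biUnion G ∪ S0.biUnion G)
    (ρt : ℝ)
    (hρt : ρt = Real.sqrt ((rhoPlusF X Gset - rhoMinusN X G (Gset.card + ℓ + k0 - 1)) *
      (rhoPlusN X G (ℓ + k0 - 1) - rhoMinusN X G (Gset.card + ℓ + k0 - 1)))) :
    (1 / (n : ℝ)) *
        |∑ j ∈ Finset.univ \ (S ∪ S0), (X *ᵥ restr Gset u) ⬝ᵥ (X *ᵥ restr (G j) u)| ≤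
      lamMinus⁻¹ * ρt * norm2 (restr Gset u) *
        ∑ j ∈ Finset.univ \ S, lam j * norm2 (restr (G j) u) := by
  classical
  obtain ⟨hdisj, -⟩ := hG
  have hρt0 : 0 ≤ ρt := hρt ▸ Real.sqrt_nonneg _
  have hlamM0 : 0 ≤ lamMinus := hlamMinus ▸ Real.sqrt_nonneg _
  have hRHS0 : 0 ≤ lamMinus⁻¹ * ρt * norm2 (restr Gset u) *
      ∑ j ∈ Finset.univ \ S, lam j * norm2 (restr (G j) u) := by
    refine mul_nonneg (mul_nonneg (mul_nonneg (inv_nonneg.mpr hlamM0) hρt0)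
      (norm2_nonneg' _)) ?_
    exact Finset.sum_nonneg fun j _ => mul_nonneg (hlam j).le (norm2_nonneg' _)
  rcases Nat.eq_zero_or_pos n with hn0 | hn
  · subst hn0
    simp only [Nat.cast_zero, div_zero, zero_mul]
    exact hRHS0
  have hnR : (0:ℝ) < n := by exact_mod_cast hn
  by_cases hA : restr Gset u = 0
  · simp only [hA, Matrix.mulVec_zero, zero_dotProduct, Finset.sum_const_zero,
      abs_zero, mul_zero]
    exact hA ▸ hRHS0
  -- group sizes
  have hk0w : ∀ j, (G j).card ≤ k0 := fun j =>
    hk0 ▸ Finset.le_sup (f := fun j => (G j).card) (Finset.mem_univ j)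
  have hcardw : ∀ B : Finset (Fin m), (B.biUnion G).card = ∑ j ∈ B, (G j).card :=
    fun B => Finset.card_biUnion fun x _ y _ hxy => hdisj x y hxy
  have hk01 : 1 ≤ k0 := by
    rcases Nat.eq_zero_or_pos k0 with h0 | h
    · exfalso
      have h1 : (S0.biUnion G).card = 0 := by
        rw [hcardw]
        exact Finset.sum_eq_zero fun j _ => Nat.le_zero.mp (h0 ▸ hk0w j)
      omega
    · exact h
  -- S0 nonempty, lm2 positive
  have hS0ne : S0.Nonempty := by
    rcases S0.eq_empty_or_nonempty with rfl | h
    · exfalso; simp at hcard1; omega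
    · exact h
  obtain ⟨j0, hj0⟩ := hS0ne
  set lm2 := sInf {r : ℝ | ∃ S' : Finset (Fin m),
      ℓ ≤ (S'.biUnion G).card ∧ r = ∑ j ∈ S', lam j ^ 2} with hlm2def
  have hbdd : BddBelow {r : ℝ | ∃ S' : Finset (Fin m),
      ℓ ≤ (S'.biUnion G).card ∧ r = ∑ j ∈ S', lam j ^ 2} := by
    refine ⟨0, ?_⟩
    rintro r ⟨S', -, rfl⟩
    exact Finset.sum_nonneg fun j _ => sq_nonneg _
  have hmem0 : (∑ j ∈ S0, lam j ^ 2) ∈ {r : ℝ | ∃ S' : Finset (Fin m),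
      ℓ ≤ (S'.biUnion G).card ∧ r = ∑ j ∈ S', lam j ^ 2} := ⟨S0, hcard1, rfl⟩
  have hlm2S0 : lm2 ≤ ∑ j ∈ S0, lam j ^ 2 := csInf_le hbdd hmem0
  set c := Finset.univ.inf' ⟨j0, Finset.mem_univ j0⟩ (fun j => lam j ^ 2) with hc
  have hcpos : 0 < c := by
    rw [hc]; refine (Finset.lt_inf'_iff ..).mpr ?_
    intro j _
    exact pow_pos (hlam j) 2
  have hlm2pos : 0 < lm2 := by
    have hle : c ≤ lm2 := by
      refine le_csInf ⟨_, hmem0⟩ ?_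
      rintro r ⟨S', hS'c, rfl⟩
      have hS'ne : S'.Nonempty := by
        rcases S'.eq_empty_or_nonempty with rfl | h
        · exfalso; simp at hS'c; omega
        · exact h
      obtain ⟨j1, hj1⟩ := hS'ne
      calc c ≤ lam j1 ^ 2 := Finset.inf'_le _ (Finset.mem_univ j1)
        _ ≤ ∑ j ∈ S', lam j ^ 2 :=
            Finset.single_le_sum (fun j _ => sq_nonneg (lam j)) hj1
    linarith
  have hlamMs : lamMinus = Real.sqrt lm2 := hlamMinus
  have hs2 : 0 < Real.sqrt lm2 := Real.sqrt_pos.mpr hlm2pos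
  -- data for the shifting induction
  set T := Finset.univ \ (S ∪ S0) with hT
  set ν := fun j => norm2 (restr (G j) u) with hν
  set d := fun j => ((X *ᵥ restr Gset u) ⬝ᵥ (X *ᵥ restr (G j) u)) / n with hd
  set w := fun j => (G j).card with hw
  set K := ρt * norm2 (restr Gset u) with hK
  have hK0 : 0 ≤ K := mul_nonneg hρt0 (norm2_nonneg' _)
  have hfull : ∀ B : Finset (Fin m), ℓ ≤ ∑ j ∈ B, w j → lm2 ≤ ∑ j ∈ B, lam j ^ 2 := by
    intro B hB
    refine csInf_le hbdd ⟨B, ?_, rfl⟩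
    rw [hcardw]
    exact hB
  have hblock : ∀ B : Finset (Fin m), B ⊆ T → (∑ j ∈ B, w j) ≤ ℓ + k0 - 1 →
      |∑ j ∈ B, d j| ≤ K * Real.sqrt (∑ j ∈ B, ν j ^ 2) := by
    intro B hBT hBw
    have hBout : ∀ j ∈ B, j ∉ S ∪ S0 := by
      intro j hj
      have := hBT hj
      rw [hT, Finset.mem_sdiff] at this
      exact this.2
    have hBcard : (B.biUnion G).card ≤ ℓ + k0 - 1 := by
      rw [hcardw]; exact hBw
    have habsd : |∑ j ∈ B, d j| =
        |∑ j ∈ B, (X *ᵥ restr Gset u) ⬝ᵥ (X *ᵥ restr (G j) u)| / n := by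
      rw [hd]
      rw [← Finset.sum_div, abs_div, abs_of_pos hnR]
    rw [habsd, hK, hν]
    exact block_spectral n p m hn X G hdisj u S S0 Gset hGset k0 ℓ hℓ hk01 ρt hρt hA
      B hBout hBcard
  -- sorted list of T
  obtain ⟨l, hnd, hts, hsort⟩ := exists_sorted_list (fun j => ν j / lam j) T
  have hsubT : l.toFinset ⊆ T := hts ▸ Finset.Subset.refl _
  have hordS0 : ∀ j ∈ l, ∀ j' ∈ S0, ν j / lam j ≤ ν j' / lam j' := by
    intro j hj j' hj'
    have hjT : j ∈ T := hsubT (List.mem_toFinset.mpr hj)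
    rw [hT, Finset.mem_sdiff, Finset.mem_union] at hjT
    push_neg at hjT
    exact hS0top j' hj' j hjT.2.1 hjT.2.2
  have hmain := shift_induction d ν lam w k0 ℓ T K lm2 hK0 hlm2pos
    (fun j => norm2_nonneg' _) hlam hk0w hk01 hℓ hfull hblock
    l.length l (le_refl _) hnd hsubT hsort S0 hlm2S0 hordS0
  rw [hts] at hmain
  -- convert LHS
  have hLHS : (1 / (n : ℝ)) *
      |∑ j ∈ Finset.univ \ (S ∪ S0), (X *ᵥ restr Gset u) ⬝ᵥ (X *ᵥ restr (G j) u)| =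
      |∑ j ∈ T, d j| := by
    rw [hd, ← Finset.sum_div, abs_div, abs_of_pos hnR, hT]
    ring
  -- split RHS sum
  have hsplitU : Finset.univ \ S = S0 ∪ T := by
    rw [hT]
    ext j
    simp only [Finset.mem_sdiff, Finset.mem_union, Finset.mem_univ, true_and]
    constructor
    · intro hjS
      by_cases hj0' : j ∈ S0
      · exact Or.inl hj0'
      · exact Or.inr (by tauto)
    · rintro (hj | hj)
      · exact Finset.disjoint_left.mp hS0S hj
      · tauto
  have hdisjS0T : Disjoint S0 T := by
    rw [hT, Finset.disjoint_left]
    intro j hj hjT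
    rw [Finset.mem_sdiff, Finset.mem_union] at hjT
    exact hjT.2 (Or.inr hj)
  have hRHSsum : ∑ j ∈ Finset.univ \ S, lam j * norm2 (restr (G j) u) =
      (∑ j ∈ S0, lam j * ν j) + ∑ j ∈ T, lam j * ν j := by
    rw [hsplitU, Finset.sum_union hdisjS0T, hν]
  rw [hLHS, hRHSsum]
  have haS0 : 0 ≤ ∑ j ∈ S0, lam j * ν j :=
    Finset.sum_nonneg fun j _ => mul_nonneg (hlam j).le (norm2_nonneg' _)
  have hC0 : 0 ≤ (Real.sqrt lm2)⁻¹ * K := mul_nonneg (inv_nonneg.mpr hs2.le) hK0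
  calc |∑ j ∈ T, d j| ≤
        (Real.sqrt lm2)⁻¹ * K * ((∑ j ∈ S0, lam j * ν j) / 2 + ∑ j ∈ T, lam j * ν j) :=
        hmain
    _ ≤ (Real.sqrt lm2)⁻¹ * K * ((∑ j ∈ S0, lam j * ν j) + ∑ j ∈ T, lam j * ν j) := by
        refine mul_le_mul_of_nonneg_left ?_ hC0
        linarith [haS0]
    _ = lamMinus⁻¹ * ρt * norm2 (restr Gset u) *
        ((∑ j ∈ S0, lam j * ν j) + ∑ j ∈ T, lam j * ν j) := by
        rw [hlamMs, hK]; ring
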